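/- Let f₁, f₂, f₃ : [s]² → ℤ be strongly monotone functions and define f(x,y,z) = (f₁(x,y), f₂(x,z), f₃(y,z)) on [s]³. Then the image of f has cardinality at least s²/6. -/

import Mathlib

/-- A two-variable function is strongly monotone if it is monotone in each variable
and strictly increases when both variables strictly increase. -/
def StronglyMonotone {s : ℕ} (g : Fin s → Fin s → ℤ) : Prop :=
  (∀ x x' y, x ≤ x' → g x y ≤ g x' y) ∧
  (∀ x y y', y ≤ y' → g x y ≤ g x y') ∧
  (∀ x x' y y', x < x' → y < y' → g x y < g x' y')

private lemma sm_aux {s : ℕ} {g : Fin s → Fin s → ℤ} (h : StronglyMonotone g)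
    {x x' y y' : Fin s} (he : g x y = g x' y') (hx : x < x') : y' ≤ y := by
  by_contra hy
  push_neg at hy
  exact absurd he (ne_of_lt (h.2.2 x x' y y' hx hy))

theorem stmt2 {s : ℕ} (f₁ f₂ f₃ : Fin s → Fin s → ℤ)
    (h₁ : StronglyMonotone f₁) (h₂ : StronglyMonotone f₂) (h₃ : StronglyMonotone f₃) :
    ((s : ℝ)^2 / 6) ≤
      (Set.range fun p : Fin s × Fin s × Fin s =>
        (f₁ p.1 p.2.1, f₂ p.1 p.2.2, f₃ p.2.1 p.2.2)).ncard := by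
  classical
  rcases Nat.eq_zero_or_pos s with hs | hs
  · subst hs
    norm_num
  set F : Fin s × Fin s × Fin s → ℤ × ℤ × ℤ :=
    fun p => (f₁ p.1 p.2.1, f₂ p.1 p.2.2, f₃ p.2.1 p.2.2) with hF
  have h1 : (Set.range F) = ↑(Finset.image F Finset.univ) := by
    rw [← Set.image_univ, ← Finset.coe_univ, Finset.coe_image]
  rw [h1, Set.ncard_coe_finset]
  -- fiber bound
  have key : ∀ a : ℤ × ℤ × ℤ, (Finset.univ.filter fun p => F p = a).card ≤ 6 * s := by
    intro a
    set T := Finset.univ.filter (fun p : Fin s × Fin s × Fin s => F p = a) with hT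
    have hcomp : ∀ p ∈ T, ∀ q ∈ T,
        f₁ p.1 p.2.1 = f₁ q.1 q.2.1 ∧ f₂ p.1 p.2.2 = f₂ q.1 q.2.2 ∧
          f₃ p.2.1 p.2.2 = f₃ q.2.1 q.2.2 := by
      intro p hp q hq
      rw [hT, Finset.mem_filter] at hp hq
      have e : F p = F q := hp.2.trans hq.2.symm
      simp only [hF, Prod.mk.injEq] at e
      exact e
    set zmax : Fin s × Fin s × Fin s → Prop :=
      fun p => ∀ q ∈ T, q.1 = p.1 → q.2.1 = p.2.1 → q.2.2 ≤ p.2.2 with hzmax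
    -- (x,y) is determined by x - y within T
    have keyxy : ∀ p ∈ T, ∀ q ∈ T,
        (p.1.val : ℤ) - p.2.1.val = (q.1.val : ℤ) - q.2.1.val →
        p.1 = q.1 ∧ p.2.1 = q.2.1 := by
      intro p hp q hq he
      have e := (hcomp p hp q hq).1
      rcases lt_trichotomy p.1 q.1 with hlt | heq | hgt
      · have hy : q.2.1 ≤ p.2.1 := sm_aux h₁ e hlt
        have h1 : p.1.val < q.1.val := Fin.lt_def.mp hlt
        have h2 : q.2.1.val ≤ p.2.1.val := Fin.le_def.mp hy
        omega
      · have h1 : p.1.val = q.1.val := by rw [heq]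
        have h2 : p.2.1.val = q.2.1.val := by omega
        exact ⟨heq, Fin.ext h2⟩
      · have hy : p.2.1 ≤ q.2.1 := sm_aux h₁ e.symm hgt
        have h1 : q.1.val < p.1.val := Fin.lt_def.mp hgt
        have h2 : p.2.1.val ≤ q.2.1.val := Fin.le_def.mp hy
        omega
    -- a lex-smaller point with the same z forces the larger to be z-maximal in its column
    have hforce : ∀ p ∈ T, ∀ q ∈ T, p.2.2 = q.2.2 →
        (p.1 < q.1 ∨ (p.1 = q.1 ∧ p.2.1 < q.2.1)) → zmax q := by
      intro p hp q hq hz hlex r hr hr1 hr21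
      have e := hcomp p hp r hr
      rcases hlex with h | ⟨hx, hy⟩
      · have hpr : p.1 < r.1 := hr1 ▸ h
        have := sm_aux h₂ e.2.1 hpr
        exact hz ▸ this
      · have hpr : p.2.1 < r.2.1 := hr21 ▸ hy
        have := sm_aux h₃ e.2.2 hpr
        exact hz ▸ this
    -- split T into z-maximal part and the rest
    have hsplit : T.card ≤ (T.filter zmax).card + (T.filter (fun p => ¬ zmax p)).card := by
      rw [Finset.card_filter_add_card_filter_not (p := zmax)]
    have hc1 : (T.filter zmax).card ≤ (Finset.Icc (-(s : ℤ)) s).card := by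
      apply Finset.card_le_card_of_injOn (fun p => (p.1.val : ℤ) - p.2.1.val)
      · intro p hp
        have b1 : p.1.val < s := p.1.isLt
        have b2 : p.2.1.val < s := p.2.1.isLt
        rw [Finset.mem_coe, Finset.mem_Icc]; beta_reduce
        omega
      · intro p hp q hq he
        rw [Finset.mem_coe, Finset.mem_filter] at hp hq
        obtain ⟨hx, hy⟩ := keyxy p hp.1 q hq.1 he
        have hz1 : q.2.2 ≤ p.2.2 := hp.2 q hq.1 hx.symm hy.symm
        have hz2 : p.2.2 ≤ q.2.2 := hq.2 p hp.1 hx hy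
        exact Prod.ext hx (Prod.ext hy (le_antisymm hz2 hz1))
    have hc2 : (T.filter (fun p => ¬ zmax p)).card ≤ (Finset.univ : Finset (Fin s)).card := by
      apply Finset.card_le_card_of_injOn (fun p => p.2.2)
      · intro p hp
        exact Finset.mem_coe.mpr (Finset.mem_univ _)
      · intro p hp q hq hz
        rw [Finset.mem_coe, Finset.mem_filter] at hp hq
        rcases lt_trichotomy p.1 q.1 with hlt | heq | hgt
        · exact absurd (hforce p hp.1 q hq.1 hz (Or.inl hlt)) hq.2
        · rcases lt_trichotomy p.2.1 q.2.1 with hlt' | heq' | hgt'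
          · exact absurd (hforce p hp.1 q hq.1 hz (Or.inr ⟨heq, hlt'⟩)) hq.2
          · exact Prod.ext heq (Prod.ext heq' hz)
          · exact absurd (hforce q hq.1 p hp.1 hz.symm (Or.inr ⟨heq.symm, hgt'⟩)) hp.2
        · exact absurd (hforce q hq.1 p hp.1 hz.symm (Or.inl hgt)) hp.2
    have hIcc : (Finset.Icc (-(s : ℤ)) s).card = 2 * s + 1 := by
      rw [Int.card_Icc]
      omega
    have hfin : (Finset.univ : Finset (Fin s)).card = s := by simp
    omega
  have hdom : (Finset.univ : Finset (Fin s × Fin s × Fin s)).card = s ^ 3 := by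
    simp only [Finset.card_univ, Fintype.card_prod, Fintype.card_fin]
    ring
  have h2 : s ^ 3 ≤ 6 * s * (Finset.univ.image F).card := by
    rw [← hdom]
    exact Finset.card_le_mul_card_image Finset.univ (6 * s) fun b _ => key b
  have hc : ((s : ℝ)) ^ 3 ≤ 6 * s * ((Finset.univ.image F).card : ℝ) := by
    exact_mod_cast h2
  have hs' : (0 : ℝ) < s := by exact_mod_cast hs
  rw [div_le_iff₀ (by norm_num : (0:ℝ) < 6)]
  nlinarith [hc, hs']
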